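/- Let G be a group, Γ a subgroup, t ∈ G with tΓt^{-1} ≤ Γ, and suppose G is generated by Γ and t. If χ : G → ℤ is a homomorphism with χ(t) = 1 and χ(Γ) = 0, then the kernel of χ equals the union over i ≥ 0 of t^{-i} Γ t^i. -/
import Mathlib

theorem stmt_8 (G : Type*) [Group G] (Γ : Subgroup G) (t : G)
    (hconj : ∀ γ ∈ Γ, t * γ * t⁻¹ ∈ Γ)
    (hgen : Subgroup.closure ((Γ : Set G) ∪ {t}) = ⊤)
    (χ : G →* Multiplicative ℤ)
    (hχt : χ t = Multiplicative.ofAdd 1)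
    (hχΓ : ∀ γ ∈ Γ, χ γ = 1) :
    ∀ g : G, g ∈ χ.ker ↔ ∃ (i : ℕ) (γ : G), γ ∈ Γ ∧ g = t⁻¹ ^ i * γ * t ^ i := by
  have hconj' : ∀ (k : ℕ), ∀ γ ∈ Γ, t ^ k * γ * t⁻¹ ^ k ∈ Γ := by
    intro k
    induction k with
    | zero => simp only [pow_zero, one_mul, mul_one]; exact fun γ h => h
    | succ n ih =>
      intro γ hγ
      have h2 := hconj _ (ih γ hγ)
      have : t ^ (n + 1) * γ * t⁻¹ ^ (n + 1)
          = t * (t ^ n * γ * t⁻¹ ^ n) * t⁻¹ := by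
        rw [pow_succ, pow_succ]; group
      rw [this]; exact h2
  set S : Subgroup G := {
    carrier := {g | ∃ (a b : ℕ) (γ : G), γ ∈ Γ ∧ g = t⁻¹ ^ a * γ * t ^ b}
    one_mem' := ⟨0, 0, 1, Γ.one_mem, by simp⟩
    mul_mem' := by
      rintro x y ⟨a, b, γ, hγ, rfl⟩ ⟨c, d, δ, hδ, rfl⟩
      rcases le_or_gt c b with h | h
      · obtain ⟨e, rfl⟩ := Nat.exists_eq_add_of_le h
        refine ⟨a, e + d, γ * (t ^ e * δ * t⁻¹ ^ e),
          Γ.mul_mem hγ (hconj' e δ hδ), ?_⟩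
        rw [pow_add, pow_add]; group
      · obtain ⟨e, rfl⟩ := Nat.exists_eq_add_of_lt h
        refine ⟨a + (e + 1), d, (t ^ (e + 1) * γ * t⁻¹ ^ (e + 1)) * δ,
          Γ.mul_mem (hconj' (e + 1) γ hγ) hδ, ?_⟩
        rw [pow_add, pow_add]; group
    inv_mem' := by
      rintro x ⟨a, b, γ, hγ, rfl⟩
      exact ⟨b, a, γ⁻¹, Γ.inv_mem hγ, by group⟩ }
  have hS : ∀ g : G, g ∈ S := by
    have : Subgroup.closure ((Γ : Set G) ∪ {t}) ≤ S := by
      rw [Subgroup.closure_le]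
      rintro x (hx | rfl)
      · exact ⟨0, 0, x, hx, by simp⟩
      · exact ⟨0, 1, 1, Γ.one_mem, by simp⟩
    intro g
    exact this (hgen ▸ Subgroup.mem_top g)
  have hval : ∀ (a b : ℕ) (γ : G), γ ∈ Γ →
      χ (t⁻¹ ^ a * γ * t ^ b) = Multiplicative.ofAdd ((b : ℤ) - a) := by
    intro a b γ hγ
    rw [map_mul, map_mul, map_pow, map_pow, map_inv, hχt, hχΓ γ hγ]
    rw [mul_one]
    rw [← ofAdd_neg, ← ofAdd_nsmul, ← ofAdd_nsmul, ← ofAdd_add]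
    congr 1
    simp
    ring
  intro g
  constructor
  · intro hg
    obtain ⟨a, b, γ, hγ, rfl⟩ := hS g
    have h1 := hval a b γ hγ
    rw [MonoidHom.mem_ker] at hg
    rw [hg] at h1
    have : (b : ℤ) - a = 0 := by
      have := congrArg Multiplicative.toAdd h1.symm
      simpa using this
    have hab : a = b := by omega
    exact ⟨a, γ, hγ, by rw [hab]⟩
  · rintro ⟨i, γ, hγ, rfl⟩
    rw [MonoidHom.mem_ker, hval i i γ hγ]
    simp
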